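/- Fix an integer k ≥ 1. Let T be a random and/or tree shape (any probability distribution on the countable set of and/or tree shapes), and let T̂ be its uniform random k-labelling, performed independently of T. Then for every k-variable Boolean function f, C(k, Ess(f)) · P(f[T̂] = f) ≤ P(‖T‖ ≥ L(f)), where C(k, Ess(f)) is a binomial coefficient. -/

import Mathlib

/-- A plane rooted tree (shape of an and/or tree). -/
inductive PTree where
  | leaf : PTree
  | node : List PTree → PTree

/-- An and/or tree shape: every internal node has at least two children. -/
inductive IsShape : PTree → Prop
  | leaf : IsShape .leaf
  | node (cs : List PTree) : 2 ≤ cs.length → (∀ c ∈ cs, IsShape c) → IsShape (.node cs)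

/-- The size of a shape: its number of leaves. -/
def PTree.size : PTree → ℕ
  | .leaf => 1
  | .node cs => (cs.attach.map (fun ⟨c, _⟩ => c.size)).sum
decreasing_by
  have := List.sizeOf_lt_of_mem ‹c ∈ cs›; simp only [PTree.node.sizeOf_spec]; omega

/-- The saturation level of a shape: the minimal depth of a leaf. -/
def PTree.satLevel : PTree → ℕ
  | .leaf => 0
  | .node cs => ((cs.attach.map (fun ⟨c, _⟩ => c.satLevel)).min?.getD 0) + 1
decreasing_by
  have := List.sizeOf_lt_of_mem ‹c ∈ cs›; simp only [PTree.node.sizeOf_spec]; omega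

/-- A `k`-labelled and/or tree: internal nodes carry a connective
(`true` = ∧, `false` = ∨), leaves carry a literal: a variable index in `Fin k`
together with a polarity (`true` = positive, `false` = negated). -/
inductive LTree (k : ℕ) where
  | leaf : Fin k → Bool → LTree k
  | node : Bool → List (LTree k) → LTree k

/-- Evaluation of a labelled and/or tree, with the convention that a childless
internal node labelled ∧ (resp. ∨) evaluates to `false` (resp. `true`). -/
def LTree.eval {k : ℕ} : LTree k → (Fin k → Bool) → Bool
  | .leaf i pos, x => if pos then x i else !(x i)
  | .node c cs, x =>
    if cs.isEmpty then !c
    else if c then (cs.attach.map (fun ⟨t, _⟩ => t.eval x)).all (fun b => b)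
    else (cs.attach.map (fun ⟨t, _⟩ => t.eval x)).any (fun b => b)
decreasing_by
  all_goals (have := List.sizeOf_lt_of_mem ‹t ∈ cs›; simp only [LTree.node.sizeOf_spec]; omega)

/-- A valid labelled and/or tree: every internal node has at least two children. -/
inductive IsLShape {k : ℕ} : LTree k → Prop
  | leaf (i : Fin k) (pos : Bool) : IsLShape (.leaf i pos)
  | node (c : Bool) (cs : List (LTree k)) : 2 ≤ cs.length →
      (∀ t ∈ cs, IsLShape t) → IsLShape (.node c cs)

/-- The size of a labelled tree: its number of leaves. -/
def LTree.size {k : ℕ} : LTree k → ℕ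
  | .leaf _ _ => 1
  | .node _ cs => (cs.attach.map (fun ⟨t, _⟩ => t.size)).sum
decreasing_by
  have := List.sizeOf_lt_of_mem ‹t ∈ cs›; simp only [LTree.node.sizeOf_spec]; omega

/-- The list of leaf labels of a labelled tree. -/
def LTree.leaves {k : ℕ} : LTree k → List (Fin k × Bool)
  | .leaf i pos => [(i, pos)]
  | .node _ cs => (cs.attach.map (fun ⟨t, _⟩ => t.leaves)).flatten
decreasing_by
  have := List.sizeOf_lt_of_mem ‹t ∈ cs›; simp only [LTree.node.sizeOf_spec]; omega

/-- The list of all `k`-labellings of a given shape (each one equally likely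
under the uniform random labelling). -/
def labellings (k : ℕ) : PTree → List (LTree k)
  | .leaf => (List.finRange k).flatMap (fun i => [LTree.leaf i true, LTree.leaf i false])
  | .node cs => [true, false].flatMap (fun c =>
      ((cs.attach.map (fun ⟨t, _⟩ => labellings k t)).sections).map (fun l => LTree.node c l))
decreasing_by
  have := List.sizeOf_lt_of_mem ‹t ∈ cs›; simp only [PTree.node.sizeOf_spec]; omega

open Classical in
/-- The probability that the uniform random `k`-labelling of the shape `t`
computes a Boolean function belonging to the set `s`. -/
noncomputable def Pr (k : ℕ) (t : PTree) (s : Set ((Fin k → Bool) → Bool)) : ℝ :=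
  (((labellings k t).filter (fun τ => decide (τ.eval ∈ s))).length : ℝ)
    / ((labellings k t).length : ℝ)

/-- `Pfun k t g` = `P_k[t](g)`: the probability that the uniform random
`k`-labelling of the shape `t` computes exactly the Boolean function `g`. -/
noncomputable def Pfun (k : ℕ) (t : PTree) (g : (Fin k → Bool) → Bool) : ℝ :=
  Pr k t {g}

/-- `x_i` is an essential variable of `f`. -/
def Essential {k : ℕ} (f : (Fin k → Bool) → Bool) (i : Fin k) : Prop :=
  ∃ x : Fin k → Bool, f (Function.update x i true) ≠ f (Function.update x i false)

open Classical in
/-- The number of essential variables of `f`. -/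
noncomputable def essCount {k : ℕ} (f : (Fin k → Bool) → Bool) : ℕ :=
  (Finset.univ.filter (fun i => Essential f i)).card

open Classical in
/-- The complexity `L(f)`: the minimal number of leaves of a valid `k`-labelled
and/or tree computing `f`, with the convention `L(True) = L(False) = 0`. -/
noncomputable def complexity (k : ℕ) (f : (Fin k → Bool) → Bool) : ℕ :=
  if f = (fun _ => true) ∨ f = (fun _ => false) then 0
  else sInf {n | ∃ τ : LTree k, IsLShape τ ∧ τ.eval = f ∧ τ.size = n}
namespace AOProof
open List

variable {k : ℕ}

def LTree.relabel (σ : Fin k → Fin k) : LTree k → LTree k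
  | .leaf i pos => .leaf (σ i) pos
  | .node c cs => .node c (cs.attach.map (fun ⟨t, _⟩ => LTree.relabel σ t))
decreasing_by
  have := List.sizeOf_lt_of_mem ‹t ∈ cs›; simp only [LTree.node.sizeOf_spec]; omega

@[simp] theorem relabel_leaf (σ : Fin k → Fin k) (i : Fin k) (pos : Bool) :
    LTree.relabel σ (.leaf i pos) = .leaf (σ i) pos := by rw [LTree.relabel]

@[simp] theorem relabel_node (σ : Fin k → Fin k) (c : Bool) (cs : List (LTree k)) :
    LTree.relabel σ (.node c cs) = .node c (cs.map (LTree.relabel σ)) := by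
  rw [LTree.relabel]; simp only [List.map_attach_eq_pmap, List.pmap_eq_map]

theorem eval_node (c : Bool) (cs : List (LTree k)) (x : Fin k → Bool) :
    (LTree.node c cs).eval x = if cs.isEmpty then !c
      else if c then (cs.map (fun t => t.eval x)).all (fun b => b)
      else (cs.map (fun t => t.eval x)).any (fun b => b) := by
  rw [LTree.eval]; simp only [List.map_attach_eq_pmap, List.pmap_eq_map]

theorem size_node (c : Bool) (cs : List (LTree k)) :
    (LTree.node c cs).size = (cs.map LTree.size).sum := by
  rw [LTree.size]; simp only [List.map_attach_eq_pmap, List.pmap_eq_map]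

theorem psize_node (cs : List PTree) :
    (PTree.node cs).size = (cs.map PTree.size).sum := by
  rw [PTree.size]; simp only [List.map_attach_eq_pmap, List.pmap_eq_map]

theorem labellings_node (cs : List PTree) :
    labellings k (.node cs) = [true, false].flatMap (fun c =>
      ((cs.map (labellings k)).sections).map (fun l => LTree.node c l)) := by
  rw [labellings]; simp only [List.map_attach_eq_pmap, List.pmap_eq_map]

theorem eval_relabel (σ : Fin k → Fin k) : ∀ (τ : LTree k) (x : Fin k → Bool),
    (LTree.relabel σ τ).eval x = τ.eval (x ∘ σ)
  | .leaf i pos, x => by simp [LTree.eval, Function.comp]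
  | .node c cs, x => by
    rw [relabel_node, eval_node, eval_node, List.map_map]
    have h : cs.map (fun t => (LTree.relabel σ t).eval x) = cs.map (fun t => t.eval (x ∘ σ)) :=
      List.map_congr_left (fun t ht => eval_relabel σ t x)
    simp only [Function.comp_def, h]
    rw [show (cs.map (LTree.relabel σ)).isEmpty = cs.isEmpty from by cases cs <;> rfl]
decreasing_by
  all_goals (have := List.sizeOf_lt_of_mem ‹t ∈ cs›; simp only [LTree.node.sizeOf_spec]; omega)

theorem size_relabel (σ : Fin k → Fin k) : ∀ τ : LTree k, (LTree.relabel σ τ).size = τ.size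
  | .leaf i pos => by simp [LTree.size]
  | .node c cs => by
    rw [relabel_node, size_node, size_node, List.map_map]
    exact congrArg _ (List.map_congr_left (fun t ht => size_relabel σ t))
decreasing_by
  all_goals (have := List.sizeOf_lt_of_mem ‹t ∈ cs›; simp only [LTree.node.sizeOf_spec]; omega)

/-- mapping sections -/
theorem sections_map {α β : Type*} (g : α → β) : ∀ L : List (List α),
    (L.map (List.map g)).sections = L.sections.map (List.map g)
  | [] => rfl
  | l :: L => by
    simp only [List.map_cons, List.sections, sections_map g L, List.flatMap_map,
      List.map_flatMap, List.map_map, Function.comp_def, List.map_cons]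

theorem sections_perm {α : Type*} {L₁ L₂ : List (List α)}
    (h : List.Forall₂ List.Perm L₁ L₂) : L₁.sections.Perm L₂.sections := by
  induction h with
  | nil => exact List.Perm.refl _
  | @cons l₁ l₂ L₁ L₂ hl hL ih =>
    simp only [List.sections]
    exact (ih.flatMap_right _).trans (List.Perm.flatMap_left _ (fun s _ => hl.map _))

end AOProof
namespace AOProof
open List

variable {k : ℕ}

theorem forall₂_map_eq {α β γ : Type*} {R : α → β → Prop} {f : α → γ} {g : β → γ} :
    ∀ {l₁ : List α} {l₂ : List β}, List.Forall₂ R l₁ l₂ →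
      (∀ a b, b ∈ l₂ → R a b → f a = g b) → l₁.map f = l₂.map g := by
  intro l₁ l₂ h
  induction h with
  | nil => intro _; rfl
  | cons hab _ ih =>
    intro hfg
    simp only [List.map_cons, hfg _ _ List.mem_cons_self hab,
      ih (fun a b hb hr => hfg a b (List.mem_cons_of_mem _ hb) hr)]

theorem forall₂_mem_left {α β : Type*} {R : α → β → Prop} {a : α} :
    ∀ {l₁ : List α} {l₂ : List β}, List.Forall₂ R l₁ l₂ → a ∈ l₁ → ∃ b ∈ l₂, R a b := by
  intro l₁ l₂ h
  induction h with
  | nil => intro h; cases h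
  | cons hab _ ih =>
    intro hm
    rcases List.mem_cons.1 hm with rfl | hm
    · exact ⟨_, List.mem_cons_self, hab⟩
    · obtain ⟨b, hb, hr⟩ := ih hm; exact ⟨b, List.mem_cons_of_mem _ hb, hr⟩

theorem labellings_relabel_perm (σ : Equiv.Perm (Fin k)) : ∀ t : PTree,
    ((labellings k t).map (LTree.relabel σ)).Perm (labellings k t)
  | .leaf => by
    rw [labellings]
    rw [List.map_flatMap]
    have h1 : ∀ i : Fin k, ([LTree.leaf i true, LTree.leaf i false].map (LTree.relabel σ))
        = [LTree.leaf (σ i) true, LTree.leaf (σ i) false] := by intro i; simp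
    simp only [h1]
    have h2 : (List.finRange k).flatMap (fun i => [LTree.leaf (σ i) true, LTree.leaf (σ i) false])
        = ((List.finRange k).map σ).flatMap (fun i => [LTree.leaf i true, LTree.leaf i false]) := by
      rw [List.flatMap_map]
    rw [h2]
    exact (σ.map_finRange_perm).flatMap_right _
  | .node cs => by
    rw [labellings_node]
    rw [List.map_flatMap]
    apply List.Perm.flatMap_left
    intro c _
    rw [List.map_map]
    have h1 : (LTree.relabel σ ∘ fun l => LTree.node c l)
        = (fun l => LTree.node c l) ∘ List.map (LTree.relabel σ) := by
      funext l; simp [Function.comp]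
    rw [h1, ← List.map_map]
    apply List.Perm.map
    have h2 : (cs.map (labellings k)).sections.map (List.map (LTree.relabel σ))
        = ((cs.map (labellings k)).map (List.map (LTree.relabel σ))).sections :=
      (sections_map _ _).symm
    rw [h2, List.map_map]
    apply sections_perm
    rw [List.forall₂_map_left_iff, List.forall₂_map_right_iff]
    apply List.forall₂_same.2
    intro t ht
    exact labellings_relabel_perm σ t
decreasing_by
  have := List.sizeOf_lt_of_mem ‹t ∈ cs›; simp only [PTree.node.sizeOf_spec]; omega

theorem mem_labellings {t : PTree} (ht : IsShape t) : ∀ {τ : LTree k},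
    τ ∈ labellings k t → IsLShape τ ∧ τ.size = t.size := by
  induction ht with
  | leaf =>
    intro τ hτ
    rw [labellings] at hτ
    simp only [List.mem_flatMap, List.mem_cons, List.not_mem_nil, or_false] at hτ
    obtain ⟨i, -, rfl | rfl⟩ := hτ <;>
      exact ⟨IsLShape.leaf _ _, by rw [LTree.size, PTree.size]⟩
  | node cs h2 hall ih =>
    intro τ hτ
    rw [labellings_node] at hτ
    simp only [List.mem_flatMap, List.mem_map] at hτ
    obtain ⟨c, -, l, hl, rfl⟩ := hτ
    rw [List.mem_sections, List.forall₂_map_right_iff] at hl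
    constructor
    · refine IsLShape.node c l ?_ ?_
      · rw [hl.length_eq]; exact h2
      · intro τ' hτ'
        obtain ⟨t', ht', hmem⟩ := forall₂_mem_left hl hτ'
        exact (ih t' ht' hmem).1
    · rw [size_node, psize_node]
      congr 1
      exact forall₂_map_eq hl (fun τ' t' ht' h => (ih t' ht' h).2)

end AOProof
namespace AOProof
open List

variable {k : ℕ}

open Classical in
theorem Pfun_eq (t : PTree) (g : (Fin k → Bool) → Bool) :
    Pfun k t g = (((labellings k t).countP (fun τ => decide (τ.eval = g))) : ℝ)
      / ((labellings k t).length : ℝ) := by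
  rw [Pfun, Pr, ← List.countP_eq_length_filter]
  congr 2
  apply List.countP_congr
  intro τ _
  simp [Set.mem_singleton_iff]

theorem Pfun_nonneg (t : PTree) (g : (Fin k → Bool) → Bool) : 0 ≤ Pfun k t g := by
  rw [Pfun_eq]
  positivity

open Classical in
theorem countP_relabel (σ : Equiv.Perm (Fin k)) (t : PTree) (g : (Fin k → Bool) → Bool) :
    (labellings k t).countP (fun τ => decide (τ.eval = fun x => g (x ∘ σ)))
      = (labellings k t).countP (fun τ => decide (τ.eval = g)) := by
  have hperm := (labellings_relabel_perm σ.symm t).countP_eq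
      (fun τ => decide (τ.eval = g))
  rw [List.countP_map] at hperm
  rw [← hperm]
  apply List.countP_congr
  intro τ _
  simp only [Function.comp_apply, decide_eq_true_eq]
  constructor
  · intro h
    funext x
    rw [eval_relabel, h]
    show g ((x ∘ ⇑σ.symm) ∘ ⇑σ) = g x
    congr 1
    funext i; simp
  · intro h
    funext x
    show τ.eval x = g (x ∘ ⇑σ)
    rw [← h, eval_relabel]
    show τ.eval x = τ.eval ((x ∘ ⇑σ) ∘ ⇑σ.symm)
    congr 1
    funext i; simp

open Classical in
theorem Pfun_relabel (σ : Equiv.Perm (Fin k)) (t : PTree) (g : (Fin k → Bool) → Bool) :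
    Pfun k t (fun x => g (x ∘ σ)) = Pfun k t g := by
  rw [Pfun_eq, Pfun_eq, countP_relabel]

theorem update_comp (σ : Equiv.Perm (Fin k)) (x : Fin k → Bool) (i : Fin k) (b : Bool) :
    (Function.update x i b) ∘ σ = Function.update (x ∘ σ) (σ.symm i) b := by
  funext j
  simp only [Function.comp_apply, Function.update]
  by_cases hj : j = σ.symm i
  · subst hj; simp
  · have : ¬ (σ j = i) := fun h => hj (by simp [← h])
    simp [hj, this]

theorem essential_relabel (σ : Equiv.Perm (Fin k)) (f : (Fin k → Bool) → Bool) (i : Fin k) :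
    Essential (fun x => f (x ∘ σ)) i ↔ Essential f (σ.symm i) := by
  constructor
  · rintro ⟨x, hx⟩
    refine ⟨x ∘ σ, ?_⟩
    have hx' : f (Function.update x i true ∘ ⇑σ) ≠ f (Function.update x i false ∘ ⇑σ) := hx
    rwa [update_comp, update_comp] at hx'
  · rintro ⟨y, hy⟩
    refine ⟨y ∘ ⇑σ.symm, ?_⟩
    show f (Function.update (y ∘ ⇑σ.symm) i true ∘ ⇑σ) ≠ f (Function.update (y ∘ ⇑σ.symm) i false ∘ ⇑σ)
    rw [update_comp, update_comp]
    have : (y ∘ ⇑σ.symm) ∘ ⇑σ = y := by funext j; simp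
    rwa [this]

theorem exists_perm (E A : Finset (Fin k)) (h : E.card = A.card) :
    ∃ σ : Equiv.Perm (Fin k), ∀ i, i ∈ E ↔ σ i ∈ A := by
  classical
  have hc : (Eᶜ : Finset (Fin k)).card = (Aᶜ : Finset (Fin k)).card := by
    rw [Finset.card_compl, Finset.card_compl, h]
  let e1 : (E : Finset (Fin k)) ≃ (A : Finset (Fin k)) := Finset.equivOfCardEq h
  let e2 : (Eᶜ : Finset (Fin k)) ≃ (Aᶜ : Finset (Fin k)) := Finset.equivOfCardEq hc
  let c1 : {x : Fin k // ¬ x ∈ E} ≃ (Eᶜ : Finset (Fin k)) :=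
    Equiv.subtypeEquivRight (by intro x; simp)
  let c2 : {x : Fin k // ¬ x ∈ A} ≃ (Aᶜ : Finset (Fin k)) :=
    Equiv.subtypeEquivRight (by intro x; simp)
  let e2' : {x : Fin k // ¬ x ∈ E} ≃ {x : Fin k // ¬ x ∈ A} := (c1.trans e2).trans c2.symm
  refine ⟨(Equiv.sumCompl (· ∈ E)).symm.trans ((e1.sumCongr e2').trans
    (Equiv.sumCompl (· ∈ A))), ?_⟩
  intro i
  by_cases hi : i ∈ E
  · simp only [Equiv.trans_apply, Equiv.sumCompl_symm_apply_of_pos hi,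
      Equiv.sumCongr_apply, Sum.map_inl, Equiv.sumCompl_apply_inl]
    exact ⟨fun _ => (e1 ⟨i, hi⟩).2, fun _ => hi⟩
  · simp only [Equiv.trans_apply, Equiv.sumCompl_symm_apply_of_neg hi,
      Equiv.sumCongr_apply, Sum.map_inr, Equiv.sumCompl_apply_inr]
    exact ⟨fun h => absurd h hi, fun h => absurd (e2' ⟨i, hi⟩).2 (not_not.2 h)⟩

theorem sum_countP_le {ι α : Type*} (s : Finset ι) (p : ι → α → Bool)
    (h : ∀ x : α, ∀ a ∈ s, ∀ b ∈ s, p a x → p b x → a = b) :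
    ∀ l : List α, (∑ a ∈ s, l.countP (p a)) ≤ l.length := by
  classical
  intro l
  induction l with
  | nil => simp
  | cons x l ih =>
    simp only [List.countP_cons, List.length_cons]
    rw [Finset.sum_add_distrib]
    have h1 : (∑ a ∈ s, if p a x = true then 1 else 0) ≤ 1 := by
      rw [Finset.sum_boole]
      norm_cast
      apply Finset.card_le_one.2
      intro a ha b hb
      exact h x a (Finset.mem_filter.1 ha).1 b (Finset.mem_filter.1 hb).1
        (Finset.mem_filter.1 ha).2 (Finset.mem_filter.1 hb).2
    omega

end AOProof
namespace AOProof
open List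

variable {k : ℕ}

open Classical in
theorem key_bound (f : (Fin k → Bool) → Bool) {t : PTree} (ht : IsShape t) :
    (k.choose (essCount f) : ℝ) * Pfun k t f ≤ if complexity k f ≤ t.size then (1:ℝ) else 0 := by
  by_cases hc : complexity k f ≤ t.size
  · rw [if_pos hc]
    set e := essCount f with he
    set E := (Finset.univ.filter (fun i => Essential f i)) with hE
    have hEcard : E.card = e := rfl
    set s := Finset.powersetCard e (Finset.univ : Finset (Fin k)) with hs
    have hscard : s.card = k.choose e := by
      rw [hs, Finset.card_powersetCard, Finset.card_univ, Fintype.card_fin]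
    have hex : ∀ A : {A : Finset (Fin k) // A ∈ s},
        ∃ σ : Equiv.Perm (Fin k), ∀ i, i ∈ E ↔ σ i ∈ A.1 := by
      intro ⟨A, hA⟩
      refine exists_perm E A ?_
      rw [hEcard, (Finset.mem_powersetCard.1 hA).2]
    choose σ hσ using hex
    set g : {A : Finset (Fin k) // A ∈ s} → ((Fin k → Bool) → Bool) :=
      fun A => fun x => f (x ∘ σ A) with hg
    have hessg : ∀ A i, Essential (g A) i ↔ i ∈ A.1 := by
      intro A i
      rw [hg]
      rw [essential_relabel (σ A) f i]
      have h1 : Essential f ((σ A).symm i) ↔ (σ A).symm i ∈ E := by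
        rw [hE]; simp
      rw [h1, hσ A ((σ A).symm i), Equiv.apply_symm_apply]
    have hinj : ∀ A B : {A : Finset (Fin k) // A ∈ s}, g A = g B → A = B := by
      intro A B hAB
      apply Subtype.ext
      ext i
      rw [← hessg A i, ← hessg B i, hAB]
    have hsum : ∑ A ∈ s.attach, Pfun k t (g A) = (k.choose e : ℝ) * Pfun k t f := by
      rw [Finset.sum_congr rfl (fun A _ => Pfun_relabel (σ A) t f),
        Finset.sum_const, Finset.card_attach, hscard, nsmul_eq_mul]
    have hle : ∑ A ∈ s.attach, Pfun k t (g A) ≤ 1 := by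
      by_cases hlen : (labellings k t).length = 0
      · have hz : ∀ A ∈ s.attach, Pfun k t (g A) = 0 := by
          intro A _
          rw [Pfun_eq, hlen]
          norm_num
        rw [Finset.sum_congr rfl hz]
        simp
      · have hcount : (∑ A ∈ s.attach,
            (labellings k t).countP (fun τ => decide (τ.eval = g A)))
            ≤ (labellings k t).length := by
          apply sum_countP_le
          intro τ A _ B _ hA hB
          apply hinj
          rw [← of_decide_eq_true hA, ← of_decide_eq_true hB]
        have hlen' : (0:ℝ) < ((labellings k t).length : ℝ) := by
          exact_mod_cast Nat.pos_of_ne_zero hlen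
        calc ∑ A ∈ s.attach, Pfun k t (g A)
            = (∑ A ∈ s.attach,
              ((labellings k t).countP (fun τ => decide (τ.eval = g A)) : ℝ))
                / ((labellings k t).length : ℝ) := by
              rw [Finset.sum_div]
              exact Finset.sum_congr rfl (fun A _ => Pfun_eq t (g A))
          _ ≤ 1 := by
              rw [div_le_one hlen']
              exact_mod_cast hcount
    linarith [hsum, hle]
  · rw [if_neg hc]
    have hz : (labellings k t).countP (fun τ => decide (τ.eval = f)) = 0 := by
      rw [List.countP_eq_zero]
      intro τ hτ
      simp only [decide_eq_true_eq]
      intro hf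
      obtain ⟨hsh, hsz⟩ := mem_labellings ht hτ
      apply hc
      rw [complexity]
      split
      · exact Nat.zero_le _
      · exact hsz ▸ Nat.sInf_le ⟨τ, hsh, hf, rfl⟩
    rw [Pfun_eq, hz]
    simp

end AOProof

/-- Fix `k ≥ 1`. Let `T` be a random and/or tree shape with
distribution given by the weights `w` (nonnegative, summing to 1, supported on
shapes), labelled uniformly at random and independently of `T`. Then for every
`k`-variable Boolean function `f`,
`C(k, Ess(f)) · P(f[T̂] = f) ≤ P(‖T‖ ≥ L(f))`. -/
theorem random_shape_symmetry_bound (k : ℕ) (hk : 1 ≤ k) (w : PTree → ℝ)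
    (hw0 : ∀ t, 0 ≤ w t) (hw1 : HasSum w 1)
    (hsupp : ∀ t, w t ≠ 0 → IsShape t) (f : (Fin k → Bool) → Bool) :
    (k.choose (essCount f) : ℝ) * (∑' t : PTree, w t * Pfun k t f)
      ≤ ∑' t : PTree, (if complexity k f ≤ t.size then w t else 0) := by
  classical
  set C := (k.choose (essCount f) : ℝ) with hC
  have hC0 : (0:ℝ) ≤ C := Nat.cast_nonneg _
  have hsumw : Summable w := hw1.summable
  have hg : ∀ t, (0:ℝ) ≤ (if complexity k f ≤ t.size then w t else 0) := by
    intro t; split; exacts [hw0 t, le_refl 0]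
  have hgle : ∀ t, (if complexity k f ≤ t.size then w t else 0) ≤ w t := by
    intro t; split; exacts [le_refl _, hw0 t]
  have hgsum : Summable (fun t => if complexity k f ≤ t.size then w t else 0) :=
    Summable.of_nonneg_of_le hg hgle hsumw
  have hpoint : ∀ t, C * (w t * Pfun k t f)
      ≤ (if complexity k f ≤ t.size then w t else 0) := by
    intro t
    by_cases hw : w t = 0
    · rw [hw]
      simpa using hg t
    · have hb := AOProof.key_bound f (hsupp t hw)
      calc C * (w t * Pfun k t f) = w t * (C * Pfun k t f) := by ring
        _ ≤ w t * (if complexity k f ≤ t.size then (1:ℝ) else 0) :=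
            mul_le_mul_of_nonneg_left hb (hw0 t)
        _ = (if complexity k f ≤ t.size then w t else 0) := by split <;> ring
  have hh0 : ∀ t, (0:ℝ) ≤ C * (w t * Pfun k t f) :=
    fun t => mul_nonneg hC0 (mul_nonneg (hw0 t) (AOProof.Pfun_nonneg t f))
  have hhsum : Summable (fun t => C * (w t * Pfun k t f)) :=
    Summable.of_nonneg_of_le hh0 hpoint hgsum
  calc C * ∑' t, w t * Pfun k t f = ∑' t, C * (w t * Pfun k t f) := (tsum_mul_left).symm
    _ ≤ _ := Summable.tsum_le_tsum hpoint hhsum hgsum
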